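/- Let Γ ∈ ℬ⁰[[t]] and define ℏ∇_α(w) := ℏ ∂_α w + (∂_α Γ)·w on ℬ[[t]][[ℏ]], and D := δ_{S+Γ} + ℏΔ where δ_{S+Γ} = Σᵢ (∂(S+Γ)/∂xᵢ) ∂/∂ηᵢ. Then ℏ∇_α commutes with D on ℬ[[t]][[ℏ]]: (ℏ∇_α) ∘ D = D ∘ (ℏ∇_α). -/

import Mathlib

open Finset

variable {J : Type} [DecidableEq J]

/-- `ℂ[x]`-coefficients: `ℂ[x₁,…,xₙ]`. -/
abbrev Px (n : ℕ) := MvPolynomial (Fin n) ℂ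
/-- `ℂ[x][[t]]`. -/
abbrev Rt (n : ℕ) (J : Type) := MvPowerSeries J (Px n)
/-- `ℂ[x][[t]][[ℏ]]`. -/
abbrev RtH (n : ℕ) (J : Type) := PowerSeries (Rt n J)
/-- `𝒜[[t]][[ℏ]]` where `𝒜 = ℂ[x][η]`; components indexed by η-monomials. -/
abbrev EH (n : ℕ) (J : Type) := Finset (Fin n) → RtH n J

/-- `∂/∂xᵢ` on `ℂ[x][[t]]`, coefficientwise in `t`. -/
noncomputable def pdx {n : ℕ} (i : Fin n) (F : Rt n J) : Rt n J :=
  fun e => MvPolynomial.pderiv i (F e)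

/-- `∂/∂xᵢ` on `ℂ[x][[t]][[ℏ]]`. -/
noncomputable def pdxH {n : ℕ} (i : Fin n) (F : RtH n J) : RtH n J :=
  PowerSeries.mk fun k => pdx i (PowerSeries.coeff k F)

/-- `∂/∂t^α` on `ℂ[x][[t]]`. -/
noncomputable def tderiv {n : ℕ} (α : J) (f : Rt n J) : Rt n J :=
  fun e => (e α + 1) • f (e + Finsupp.single α 1)

/-- `∂/∂t^α` on `ℂ[x][[t]][[ℏ]]`. -/
noncomputable def tderivH {n : ℕ} (α : J) (F : RtH n J) : RtH n J :=
  PowerSeries.mk fun k => tderiv α (PowerSeries.coeff k F)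

/-- The contraction `Σᵢ fᵢ ∂/∂ηᵢ` on `𝒜[[t]][[ℏ]]`. -/
noncomputable def contrH {n : ℕ} (f : Fin n → RtH n J) (a : EH n J) : EH n J :=
  fun T => ∑ i : Fin n,
    if i ∈ T then 0
    else ((-1 : ℤ) ^ (T.filter (· < i)).card) • (f i * a (insert i T))

/-- The BV operator `Δ = Σᵢ (∂/∂xᵢ)(∂/∂ηᵢ)` on `𝒜[[t]][[ℏ]]`. -/
noncomputable def bvDeltaH {n : ℕ} (a : EH n J) : EH n J :=
  fun T => ∑ i : Fin n,
    if i ∈ T then 0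
    else ((-1 : ℤ) ^ (T.filter (· < i)).card) • pdxH i (a (insert i T))

/-- `δ_{S+Γ} = Σᵢ (∂(S+Γ)/∂xᵢ) ∂/∂ηᵢ` on `𝒜[[t]][[ℏ]]`, for `Γ ∈ ℬ⁰[[t]]`. -/
noncomputable def deltaSG {n : ℕ} (S : Px n) (Γ : Rt n J) : EH n J → EH n J :=
  contrH fun i => PowerSeries.C (pdx i (MvPowerSeries.C (σ := J) (R := Px n) S + Γ))

/-- `D = δ_{S+Γ} + ℏΔ`. -/
noncomputable def Dop {n : ℕ} (S : Px n) (Γ : Rt n J) (a : EH n J) : EH n J :=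
  fun T => deltaSG S Γ a T + PowerSeries.X * bvDeltaH a T

/-- `ℏ∇_α(w) = ℏ ∂_α w + (∂_αΓ)·w`, componentwise on `𝒜[[t]][[ℏ]]`. -/
noncomputable def hnabla {n : ℕ} (Γ : Rt n J) (α : J) (a : EH n J) : EH n J :=
  fun T => PowerSeries.X * tderivH α (a T) + PowerSeries.C (tderiv α Γ) * a T

set_option linter.unusedSectionVars false

section AuxLemmas
variable {n : ℕ}

lemma shift_sum (α : J) (e : J →₀ ℕ) (h : (J →₀ ℕ) → (J →₀ ℕ) → Px n) :
    ∑ x ∈ (Finset.HasAntidiagonal.antidiagonal (e + Finsupp.single α 1) : Finset ((J →₀ ℕ) × (J →₀ ℕ))), (x.1 α) • h x.1 x.2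
      = ∑ x ∈ Finset.HasAntidiagonal.antidiagonal e, (x.1 α + 1) • h (x.1 + Finsupp.single α 1) x.2 := by
  classical
  let φ : (J →₀ ℕ) × (J →₀ ℕ) → (J →₀ ℕ) × (J →₀ ℕ) :=
    fun x => (x.1 + Finsupp.single α 1, x.2)
  have hinj : ∀ x ∈ Finset.HasAntidiagonal.antidiagonal e, ∀ y ∈ Finset.HasAntidiagonal.antidiagonal e,
      φ x = φ y → x = y := by
    intro x _ y _ hxy
    simp only [φ, Prod.mk.injEq, add_left_inj] at hxy
    exact Prod.ext hxy.1 hxy.2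
  have key : ∑ x ∈ (Finset.HasAntidiagonal.antidiagonal e).image φ, (x.1 α) • h x.1 x.2
      = ∑ x ∈ Finset.HasAntidiagonal.antidiagonal e, (x.1 α + 1) • h (x.1 + Finsupp.single α 1) x.2 := by
    rw [Finset.sum_image hinj]
    refine Finset.sum_congr rfl fun x _ => ?_
    simp only [φ, Finsupp.add_apply, Finsupp.single_eq_same]
  rw [← key]
  refine (Finset.sum_subset ?_ ?_).symm
  · intro x hx
    simp only [Finset.mem_image] at hx
    obtain ⟨y, hy, rfl⟩ := hx
    rw [Finset.HasAntidiagonal.mem_antidiagonal] at hy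
    rw [Finset.HasAntidiagonal.mem_antidiagonal]
    show y.1 + Finsupp.single α 1 + y.2 = e + Finsupp.single α 1
    rw [add_right_comm, hy]
  · intro x hx hnx
    rcases Nat.eq_zero_or_pos (x.1 α) with h0 | h0
    · simp [h0]
    · exfalso
      apply hnx
      rw [Finset.HasAntidiagonal.mem_antidiagonal] at hx
      refine Finset.mem_image.2 ⟨(x.1 - Finsupp.single α 1, x.2), ?_, ?_⟩
      · have hs : Finsupp.single α 1 ≤ x.1 := Finsupp.single_le_iff.2 h0
        have h1 : x.1 - Finsupp.single α 1 + Finsupp.single α 1 = x.1 :=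
          tsub_add_cancel_of_le hs
        rw [Finset.HasAntidiagonal.mem_antidiagonal]
        have : x.1 - Finsupp.single α 1 + x.2 + Finsupp.single α 1
            = e + Finsupp.single α 1 := by
          rw [add_right_comm, h1, hx]
        exact add_right_cancel this
      · have hs : Finsupp.single α 1 ≤ x.1 := Finsupp.single_le_iff.2 h0
        have h1 : x.1 - Finsupp.single α 1 + Finsupp.single α 1 = x.1 :=
          tsub_add_cancel_of_le hs
        show (x.1 - Finsupp.single α 1 + Finsupp.single α 1, x.2) = x
        rw [h1]


lemma mul_apply' (u v : Rt n J) (e : J →₀ ℕ) :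
    (u * v) e = ∑ x ∈ (Finset.HasAntidiagonal.antidiagonal e : Finset ((J →₀ ℕ) × (J →₀ ℕ))), u x.1 * v x.2 :=
  MvPowerSeries.coeff_mul (R := Px n) e u v

lemma tderiv_add (α : J) (f g : Rt n J) :
    tderiv α (f + g) = tderiv α f + tderiv α g := by
  funext e
  show (e α + 1) • (f + g) (e + Finsupp.single α 1)
      = (e α + 1) • f (e + Finsupp.single α 1) + (e α + 1) • g (e + Finsupp.single α 1)
  rw [show (f + g) (e + Finsupp.single α 1)
      = f (e + Finsupp.single α 1) + g (e + Finsupp.single α 1) from rfl, smul_add]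

lemma tderiv_zero (α : J) : tderiv α (0 : Rt n J) = 0 := by
  funext e
  show (e α + 1) • (0 : Rt n J) (e + Finsupp.single α 1) = (0 : Rt n J) e
  rw [show (0 : Rt n J) (e + Finsupp.single α 1) = 0 from rfl,
    show (0 : Rt n J) e = 0 from rfl, smul_zero]

lemma pdx_add (i : Fin n) (f g : Rt n J) :
    pdx i (f + g) = pdx i f + pdx i g := by
  funext e
  show MvPolynomial.pderiv i ((f + g) e) = pdx i f e + pdx i g e
  rw [show (f + g) e = f e + g e from rfl, map_add]
  rfl

lemma pdx_zero (i : Fin n) : pdx i (0 : Rt n J) = 0 := by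
  funext e
  show MvPolynomial.pderiv i ((0 : Rt n J) e) = (0 : Rt n J) e
  rw [show (0 : Rt n J) e = 0 from rfl, map_zero]

lemma pdx_tderiv (i : Fin n) (α : J) (f : Rt n J) :
    pdx i (tderiv α f) = tderiv α (pdx i f) := by
  funext e
  show MvPolynomial.pderiv i ((e α + 1) • f (e + Finsupp.single α 1))
      = (e α + 1) • MvPolynomial.pderiv i (f (e + Finsupp.single α 1))
  exact map_nsmul (MvPolynomial.pderiv i) _ _

lemma pdx_mul (i : Fin n) (f g : Rt n J) :
    pdx i (f * g) = pdx i f * g + f * pdx i g := by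
  classical
  funext e
  show MvPolynomial.pderiv i ((f * g) e) = (pdx i f * g + f * pdx i g) e
  rw [show (pdx i f * g + f * pdx i g) e = (pdx i f * g) e + (f * pdx i g) e from rfl]
  rw [mul_apply', mul_apply', mul_apply', map_sum, ← Finset.sum_add_distrib]
  refine Finset.sum_congr rfl fun x _ => ?_
  rw [MvPolynomial.pderiv_mul]
  rfl

lemma tderiv_mul (α : J) (f g : Rt n J) :
    tderiv α (f * g) = tderiv α f * g + f * tderiv α g := by
  classical
  funext e
  show (e α + 1) • (f * g) (e + Finsupp.single α 1) = (tderiv α f * g + f * tderiv α g) e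
  rw [show (tderiv α f * g + f * tderiv α g) e
      = (tderiv α f * g) e + (f * tderiv α g) e from rfl]
  rw [mul_apply', mul_apply', mul_apply', Finset.smul_sum]
  have hsplit : ∀ x ∈ (Finset.HasAntidiagonal.antidiagonal (e + Finsupp.single α 1) :
      Finset ((J →₀ ℕ) × (J →₀ ℕ))),
      (e α + 1) • (f x.1 * g x.2)
        = (x.1 α) • (f x.1 * g x.2) + (x.2 α) • (f x.1 * g x.2) := by
    intro x hx
    rw [Finset.HasAntidiagonal.mem_antidiagonal] at hx
    have : x.1 α + x.2 α = e α + 1 := by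
      have := DFunLike.congr_fun hx α
      simpa [Finsupp.add_apply, Finsupp.single_eq_same] using this
    rw [← add_smul, this]
  rw [Finset.sum_congr rfl hsplit, Finset.sum_add_distrib]
  congr 1
  · rw [shift_sum α e (fun p q => f p * g q)]
    refine Finset.sum_congr rfl fun x _ => ?_
    show (x.1 α + 1) • (f (x.1 + Finsupp.single α 1) * g x.2) = tderiv α f x.1 * g x.2
    rw [show tderiv α f x.1 = (x.1 α + 1) • f (x.1 + Finsupp.single α 1) from rfl,
      smul_mul_assoc]
  · rw [Finsupp.sum_antidiagonal_swap (e + Finsupp.single α 1)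
      (fun p q => (q α) • (f p * g q))]
    rw [shift_sum α e (fun p q => f q * g p)]
    rw [Finsupp.sum_antidiagonal_swap e (fun p q => f p * tderiv α g q)]
    refine Finset.sum_congr rfl fun x _ => ?_
    show (x.1 α + 1) • (f x.2 * g (x.1 + Finsupp.single α 1)) = f x.2 * tderiv α g x.1
    rw [show tderiv α g x.1 = (x.1 α + 1) • g (x.1 + Finsupp.single α 1) from rfl,
      mul_smul_comm]

end AuxLemmas


section HLemmas
variable {n : ℕ}

lemma tderivH_add (α : J) (F G : RtH n J) :
    tderivH α (F + G) = tderivH α F + tderivH α G := by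
  ext k
  simp [tderivH, tderiv_add]

lemma tderivH_zero (α : J) : tderivH α (0 : RtH n J) = 0 := by
  ext k
  simp [tderivH, tderiv_zero]

noncomputable def tderivHHom (α : J) : RtH n J →+ RtH n J :=
  AddMonoidHom.mk' (tderivH α) (tderivH_add α)

lemma pdxH_add (i : Fin n) (F G : RtH n J) :
    pdxH i (F + G) = pdxH i F + pdxH i G := by
  ext k
  simp [pdxH, pdx_add]

lemma pdxH_zero (i : Fin n) : pdxH i (0 : RtH n J) = 0 := by
  ext k
  simp [pdxH, pdx_zero]

noncomputable def pdxHHom (i : Fin n) : RtH n J →+ RtH n J :=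
  AddMonoidHom.mk' (pdxH i) (pdxH_add i)

lemma tderivH_sum {ι : Type*} (α : J) (s : Finset ι) (f : ι → RtH n J) :
    tderivH α (∑ i ∈ s, f i) = ∑ i ∈ s, tderivH α (f i) :=
  map_sum (tderivHHom α) f s

lemma pdxH_sum {ι : Type*} (i : Fin n) (s : Finset ι) (f : ι → RtH n J) :
    pdxH i (∑ j ∈ s, f j) = ∑ j ∈ s, pdxH i (f j) :=
  map_sum (pdxHHom i) f s

lemma tderivH_zsmul (α : J) (m : ℤ) (F : RtH n J) :
    tderivH α (m • F) = m • tderivH α F :=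
  map_zsmul (tderivHHom α) m F

lemma pdxH_zsmul (i : Fin n) (m : ℤ) (F : RtH n J) :
    pdxH i (m • F) = m • pdxH i F :=
  map_zsmul (pdxHHom i) m F

lemma tderivH_ite (α : J) (c : Prop) [Decidable c] (F : RtH n J) :
    tderivH α (if c then 0 else F) = if c then 0 else tderivH α F := by
  split_ifs <;> simp [tderivH_zero]

lemma pdxH_ite (i : Fin n) (c : Prop) [Decidable c] (F : RtH n J) :
    pdxH i (if c then 0 else F) = if c then 0 else pdxH i F := by
  split_ifs <;> simp [pdxH_zero]

lemma tderivH_X_mul (α : J) (F : RtH n J) :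
    tderivH α (PowerSeries.X * F) = PowerSeries.X * tderivH α F := by
  ext k
  cases k with
  | zero => simp [tderivH, tderiv_zero]
  | succ k => simp [tderivH, PowerSeries.coeff_succ_X_mul]

lemma pdxH_X_mul (i : Fin n) (F : RtH n J) :
    pdxH i (PowerSeries.X * F) = PowerSeries.X * pdxH i F := by
  ext k
  cases k with
  | zero => simp [pdxH, pdx_zero]
  | succ k => simp [pdxH, PowerSeries.coeff_succ_X_mul]

lemma tderivH_C_mul (α : J) (g : Rt n J) (F : RtH n J) :
    tderivH α (PowerSeries.C g * F)
      = PowerSeries.C (tderiv α g) * F + PowerSeries.C g * tderivH α F := by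
  ext k
  simp [tderivH, PowerSeries.coeff_C_mul, tderiv_mul]

lemma pdxH_C_mul (i : Fin n) (g : Rt n J) (F : RtH n J) :
    pdxH i (PowerSeries.C g * F)
      = PowerSeries.C (pdx i g) * F + PowerSeries.C g * pdxH i F := by
  ext k
  simp [pdxH, PowerSeries.coeff_C_mul, pdx_mul]

lemma pdxH_tderivH (i : Fin n) (α : J) (F : RtH n J) :
    pdxH i (tderivH α F) = tderivH α (pdxH i F) := by
  ext k
  simp [pdxH, tderivH, pdx_tderiv]

lemma tderiv_C (α : J) (S : Px n) :
    tderiv α (MvPowerSeries.C (σ := J) (R := Px n) S) = 0 := by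
  funext e
  show (e α + 1) • (MvPowerSeries.C (σ := J) (R := Px n) S) (e + Finsupp.single α 1) = (0 : Rt n J) e
  rw [show (0 : Rt n J) e = 0 from rfl]
  rw [show (MvPowerSeries.C (σ := J) (R := Px n) S) (e + Finsupp.single α 1)
      = MvPowerSeries.coeff (e + Finsupp.single α 1) (MvPowerSeries.C (σ := J) (R := Px n) S)
      from rfl]
  rw [MvPowerSeries.coeff_C]
  rw [if_neg, smul_zero]
  intro h
  have := DFunLike.congr_fun h α
  simp [Finsupp.add_apply, Finsupp.single_eq_same] at this

lemma tderiv_pdx_SG (i : Fin n) (α : J) (S : Px n) (Γ : Rt n J) :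
    tderiv α (pdx i (MvPowerSeries.C (σ := J) (R := Px n) S + Γ)) = pdx i (tderiv α Γ) := by
  rw [← pdx_tderiv, tderiv_add, tderiv_C, zero_add]

end HLemmas

/-- The twisted connection `ℏ∇_α` commutes with `D = δ_{S+Γ} + ℏΔ` on `ℬ[[t]][[ℏ]]`. -/
theorem hnabla_commutes_with_D (n : ℕ) (S : Px n) (Γ : Rt n J) (α : J) (a : EH n J) :
    hnabla Γ α (Dop S Γ a) = Dop S Γ (hnabla Γ α a) := by
  classical
  funext T
  simp only [hnabla, Dop, deltaSG, contrH, bvDeltaH]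
  simp only [tderivH_add, tderivH_X_mul, tderivH_sum, tderivH_ite, tderivH_zsmul,
    tderivH_C_mul, pdxH_add, pdxH_X_mul, pdxH_sum, pdxH_ite, pdxH_zsmul, pdxH_C_mul,
    pdxH_tderivH, tderiv_pdx_SG]
  simp only [mul_add, Finset.mul_sum, mul_ite, mul_zero, ← Finset.sum_add_distrib]
  refine Finset.sum_congr rfl fun i _ => ?_
  by_cases hi : i ∈ T
  · simp [hi]
  · simp only [if_neg hi, zsmul_eq_mul]
    ring
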